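/- arXiv:1912.03895 — 4 statements merged into one kernel-verified Lean document; each statement's English description precedes it below -/
import Mathlib

section
/- Let $0 \leq r \leq 1/2$, $r \neq 1$, and let $P_n$ be the polynomials defined by $P_0=1$, $P_1(t)=t$, $tP_n = rP_{n-1} + (1-r)P_{n+1}$. Then for all $1 \leq m \leq n$, $(1-r)^{m-1} P_m P_n = r^m P_{n-m} + \sum_{k=1}^{m-1} r^{m-k}(1-r)^{k-1}(1-2r) P_{n-m+2k} + (1-r)^m P_{n+m}$. -/
open Polynomial Finset

noncomputable def P (r : ℝ) : ℕ → ℝ[X]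
  | 0 => 1
  | 1 => X
  | (n + 2) => (1 - r)⁻¹ • (X * P r (n + 1) - r • P r n)

lemma Prec (r : ℝ) (hr : r ≠ 1) (n : ℕ) :
    X * P r (n+1) = r • P r n + (1-r) • P r (n+2) := by
  have h : (1:ℝ) - r ≠ 0 := sub_ne_zero.mpr (Ne.symm hr)
  have e : P r (n+2) = (1-r)⁻¹ • (X * P r (n+1) - r • P r n) := rfl
  rw [e, smul_smul, mul_inv_cancel₀ h, one_smul]
  module

lemma key (r : ℝ) (hr : r ≠ 1) (m : ℕ) : ∀ j : ℕ,
    (1-r)^m • (P r (m+1) * P r (m+1+j)) =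
      r^(m+1) • P r j +
      (∑ k ∈ Finset.range m, (r^(m-k) * (1-r)^k * (1-2*r)) • P r (j+2*(k+1))) +
      (1-r)^(m+1) • P r (j+2*(m+1)) := by
  induction m using Nat.twoStepInduction with
  | zero =>
    intro j
    have h := Prec r hr j
    simp only [pow_zero, one_smul, Finset.range_zero, Finset.sum_empty, pow_one, add_zero,
      Nat.zero_add, zero_add, mul_one]
    rw [show 1 + j = j + 1 from by omega]
    exact h
  | one =>
    intro j
    have ha := Prec r hr j
    have hb := Prec r hr (j+1)
    have hc := Prec r hr (j+2)
    have hP2 : X * P r 1 = r • P r 0 + (1-r) • P r 2 := Prec r hr 0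
    have hP1 : P r 1 = X := rfl
    have hP0 : P r 0 = 1 := rfl
    rw [hP1, hP0] at hP2
    simp only [Finset.sum_range_one, pow_one, pow_zero, mul_one, Nat.sub_zero, one_mul]
    rw [show (1:ℕ) + 1 + j = j + 2 from by omega, show j + 2*(0+1) = j+2 from by omega,
      show j + 2*(1+1) = j+4 from by omega, show j+1+1 = j+2 from rfl]
    simp only [smul_eq_C_mul, map_sub, map_one, map_pow, map_mul, map_ofNat] at *
    linear_combination (-(P r (j+2))) * hP2 + X * hb + C r * ha + (1 - C r) * hc
  | more m ih0 ih1 =>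
    intro j
    have h : (1:ℝ) - r ≠ 0 := sub_ne_zero.mpr (Ne.symm hr)
    have hA := ih1 j
    have hB := ih1 (j+2)
    have hC := ih0 (j+2)
    simp only [show m+1+1 = m+2 from rfl, show m+2+1 = m+3 from rfl] at hA hB hC ⊢
    rw [show m+2+(j+2) = m+4+j from by omega, show (j+2)+2*(m+2) = j+2+2*(m+2) from rfl] at hB
    rw [show m+1+(j+2) = m+3+j from by omega] at hC
    rw [show j+2*(m+2) = j+2+2*(m+1) from by omega] at hA
    rw [show m+3+j = m+3+j from rfl, show j+2*(m+3) = j+2+2*(m+2) from by omega]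
    -- sum lemmas
    set U := ∑ k ∈ Finset.range m, (r^(m-k) * (1-r)^k * (1-2*r)) • P r (j+2+2*(k+1)) with hUdef
    have hU1 : ∑ k ∈ Finset.range (m+1), (r^(m+1-k) * (1-r)^k * (1-2*r)) • P r (j+2*(k+1))
        = (r^(m+1)*(1-2*r)) • P r (j+2) + (1-r) • U := by
      rw [Finset.sum_range_succ']
      have e1 : ∀ k ∈ Finset.range m,
          (r^(m+1-(k+1)) * (1-r)^(k+1) * (1-2*r)) • P r (j+2*(k+1+1))
          = (1-r) • ((r^(m-k) * (1-r)^k * (1-2*r)) • P r (j+2+2*(k+1))) := by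
        intro k _
        rw [show m+1-(k+1) = m-k from by omega, show j+2*(k+1+1) = j+2+2*(k+1) from by omega]
        module
      rw [Finset.sum_congr rfl e1, ← Finset.smul_sum, Nat.sub_zero,
        show j+2*(0+1) = j+2 from by omega, pow_zero]
      module
    have hU2 : ∑ k ∈ Finset.range (m+1), (r^(m+1-k) * (1-r)^k * (1-2*r)) • P r (j+2+2*(k+1))
        = r • U + (r*(1-r)^m*(1-2*r)) • P r (j+2+2*(m+1)) := by
      rw [Finset.sum_range_succ]
      have e1 : ∀ k ∈ Finset.range m,
          (r^(m+1-k) * (1-r)^k * (1-2*r)) • P r (j+2+2*(k+1))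
          = r • ((r^(m-k) * (1-r)^k * (1-2*r)) • P r (j+2+2*(k+1))) := by
        intro k hk
        have hk' : k < m := Finset.mem_range.mp hk
        rw [show m+1-k = (m-k)+1 from by omega]
        module
      rw [Finset.sum_congr rfl e1, ← Finset.smul_sum, show m+1-m = 1 from by omega, pow_one]
    have hU3 : ∑ k ∈ Finset.range (m+2), (r^(m+2-k) * (1-r)^k * (1-2*r)) • P r (j+2*(k+1))
        = (r^(m+2)*(1-2*r)) • P r (j+2) + (r*(1-r)) • U
          + (r*(1-r)^(m+1)*(1-2*r)) • P r (j+2+2*(m+1)) := by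
      rw [Finset.sum_range_succ']
      have e1 : ∀ k ∈ Finset.range (m+1),
          (r^(m+2-(k+1)) * (1-r)^(k+1) * (1-2*r)) • P r (j+2*(k+1+1))
          = (1-r) • ((r^(m+1-k) * (1-r)^k * (1-2*r)) • P r (j+2+2*(k+1))) := by
        intro k _
        rw [show m+2-(k+1) = m+1-k from by omega, show j+2*(k+1+1) = j+2+2*(k+1) from by omega]
        module
      rw [Finset.sum_congr rfl e1, ← Finset.smul_sum, hU2, Nat.sub_zero,
        show j+2*(0+1) = j+2 from by omega, pow_zero]
      module
    rw [hU1] at hA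
    rw [hU2] at hB
    rw [hU3]
    -- main polynomial identity
    have h1 : (1-r) • P r (m+3) = X * P r (m+2) - r • P r (m+1) := by
      have e : P r (m+3) = (1-r)⁻¹ • (X * P r (m+2) - r • P r (m+1)) := rfl
      rw [e, smul_smul, mul_inv_cancel₀ h, one_smul]
    have h3 : X * P r (m+3+j) = r • P r (m+2+j) + (1-r) • P r (m+4+j) := by
      have hh := Prec r hr (m+2+j)
      rw [show m+2+j+1 = m+3+j from by omega, show m+2+j+2 = m+4+j from by omega] at hh
      exact hh
    have E : (1-r)^(m+2) • (P r (m+3) * P r (m+3+j))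
        = r • ((1-r)^(m+1) • (P r (m+2) * P r (m+2+j)))
        + (1-r) • ((1-r)^(m+1) • (P r (m+2) * P r (m+4+j)))
        - (r*(1-r)) • ((1-r)^m • (P r (m+1) * P r (m+3+j))) := by
      simp only [smul_eq_C_mul, map_sub, map_one, map_pow, map_mul] at h1 h3 ⊢
      linear_combination ((1 - C r)^(m+1) * P r (m+3+j)) * h1 + ((1 - C r)^(m+1) * P r (m+2)) * h3
    rw [E, hA, hB, hC]
    module

theorem stmt_1 (r : ℝ) (hr0 : 0 ≤ r) (hr2 : r ≤ 1 / 2) (hr1 : r ≠ 1)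
    (m n : ℕ) (hm : 1 ≤ m) (hmn : m ≤ n) :
    (1 - r) ^ (m - 1) • (P r m * P r n) =
      r ^ m • P r (n - m) +
      (∑ k ∈ Finset.Icc 1 (m - 1),
        (r ^ (m - k) * (1 - r) ^ (k - 1) * (1 - 2 * r)) • P r (n - m + 2 * k)) +
      (1 - r) ^ m • P r (n + m) := by
  obtain ⟨m', rfl⟩ : ∃ m', m = m'+1 := ⟨m-1, by omega⟩
  obtain ⟨j, rfl⟩ : ∃ j, n = m'+1+j := ⟨n-(m'+1), by omega⟩
  have hk := key r hr1 m' j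
  rw [show m'+1-1 = m' from by omega, show m'+1+j-(m'+1) = j from by omega,
    show m'+1+j+(m'+1) = j+2*(m'+1) from by omega,
    ← Finset.Ico_add_one_right_eq_Icc, Finset.sum_Ico_eq_sum_range,
    show m' + 1 - 1 = m' from rfl]
  have e1 : ∀ k ∈ Finset.range m',
      (r^(m'+1-(1+k)) * (1-r)^(1+k-1) * (1-2*r)) • P r (j+2*(1+k))
      = (r^(m'-k) * (1-r)^k * (1-2*r)) • P r (j+2*(k+1)) := by
    intro k _
    rw [show m'+1-(1+k) = m'-k from by omega, show 1+k-1 = k from by omega,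
      show j+2*(1+k) = j+2*(k+1) from by omega]
  rw [Finset.sum_congr rfl e1]
  exact hk
end

section
/- For $0 < r \leq 1/2$, the measure $\mu(dt) = \frac{1}{2\pi r}\frac{\sqrt{4r(1-r)-t^2}}{1-t^2}\,dt$ on the interval $I_r = [-2\sqrt{r(1-r)}, 2\sqrt{r(1-r)}]$ is a probability measure, i.e., $\frac{1}{2\pi r}\int_{-2\sqrt{r(1-r)}}^{2\sqrt{r(1-r)}} \frac{\sqrt{4r(1-r)-t^2}}{1-t^2}\,dt = 1$. -/
open Real MeasureTheory intervalIntegral Set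

lemma aux_deriv (a b : ℝ) (ha : 0 < a) (hb : 0 < b) (hab : a^2 + b^2 = 1)
    {t : ℝ} (ht : t ∈ Set.Ioo (-a) a) :
    HasDerivAt (fun t => Real.arcsin (t/a) - b * Real.arcsin (b*t/(a*Real.sqrt (1-t^2))))
      (Real.sqrt (a^2 - t^2)/(1-t^2)) t := by
  obtain ⟨ht1, ht2⟩ := ht
  have ht2' : t^2 < a^2 := by nlinarith
  have h1t : 0 < 1 - t^2 := by nlinarith [sq_nonneg b]
  have hw : 0 < a^2 - t^2 := by linarith
  set s := Real.sqrt (1 - t^2) with hs_def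
  set w := Real.sqrt (a^2 - t^2) with hw_def
  have hs0 : 0 < s := Real.sqrt_pos.2 h1t
  have hw0 : 0 < w := Real.sqrt_pos.2 hw
  have hs2 : s^2 = 1 - t^2 := Real.sq_sqrt h1t.le
  have hw2 : w^2 = a^2 - t^2 := Real.sq_sqrt hw.le
  -- first summand
  have h1 : t/a ≠ -1 := by
    intro h; rw [div_eq_iff ha.ne'] at h; nlinarith
  have h2 : t/a ≠ 1 := by
    intro h; rw [div_eq_iff ha.ne'] at h; nlinarith
  have d1 : HasDerivAt (fun t : ℝ => Real.arcsin (t/a))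
      (1 / Real.sqrt (1 - (t/a)^2) * (1/a)) t := by
    have := (Real.hasDerivAt_arcsin h1 h2).comp t ((hasDerivAt_id t).div_const a); exact this
  -- sqrt (1 - t^2) derivative
  have dinner : HasDerivAt (fun t : ℝ => 1 - t^2) (-(2*t)) t := by
    simpa using ((hasDerivAt_pow 2 t).const_sub 1)
  have dsqrt : HasDerivAt (fun t : ℝ => Real.sqrt (1 - t^2)) (1/(2*s) * (-(2*t))) t :=
    (Real.hasDerivAt_sqrt h1t.ne').comp t dinner
  have hden : a * s ≠ 0 := by positivity
  have dg : HasDerivAt (fun t : ℝ => b*t/(a*Real.sqrt (1-t^2)))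
      ((b * 1 * (a*s) - b*t*(a * (1/(2*s) * (-(2*t))))) / (a*s)^2) t :=
    (((hasDerivAt_id t).const_mul b).div (dsqrt.const_mul a) hden)
  -- arcsin of g
  have hgsq : (b*t/(a*s))^2 < 1 := by
    rw [div_pow, div_lt_one (by positivity)]
    rw [mul_pow, mul_pow, hs2]
    nlinarith
  have hg1 : b*t/(a*s) ≠ -1 := by intro h; rw [h] at hgsq; norm_num at hgsq
  have hg2 : b*t/(a*s) ≠ 1 := by intro h; rw [h] at hgsq; norm_num at hgsq
  have d2 : HasDerivAt (fun t : ℝ => Real.arcsin (b*t/(a*Real.sqrt (1-t^2))))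
      (1 / Real.sqrt (1 - (b*t/(a*s))^2) *
        ((b * 1 * (a*s) - b*t*(a * (1/(2*s) * (-(2*t))))) / (a*s)^2)) t := by
    have := (Real.hasDerivAt_arcsin hg1 hg2).comp t dg; exact this
  have d := d1.sub (d2.const_mul b)
  refine d.congr_deriv ?_
  symm
  have e1 : Real.sqrt (1 - (t/a)^2) = w / a := by
    have : 1 - (t/a)^2 = (w/a)^2 := by
      rw [div_pow, div_pow, hw2]; field_simp
    rw [this, Real.sqrt_sq (by positivity)]
  have e2 : Real.sqrt (1 - (b*t/(a*s))^2) = w / (a*s) := by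
    have : 1 - (b*t/(a*s))^2 = (w/(a*s))^2 := by
      have hne : a*s ≠ 0 := by positivity
      field_simp
      linear_combination a^2*hs2 - hw2 - t^2*hab
    rw [this, Real.sqrt_sq (by positivity)]
  rw [e1, e2, ← hs2]
  have hsne : s ≠ 0 := hs0.ne'
  have hwne : w ≠ 0 := hw0.ne'
  field_simp
  linear_combination hab + hw2 + (b^2-1)*hs2

lemma aux_integral (a b : ℝ) (ha : 0 < a) (hb : 0 ≤ b) (hab : a^2 + b^2 = 1) :
    ∫ t in (-a)..a, Real.sqrt (a^2 - t^2)/(1-t^2) = Real.pi * (1 - b) := by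
  rcases hb.eq_or_lt with hb0 | hb0
  · -- b = 0, a = 1
    have ha1 : a = 1 := by nlinarith
    subst ha1
    rw [← hb0]
    have hderiv : ∀ x ∈ Set.Ioo (-(1:ℝ)) 1, HasDerivAt Real.arcsin
        (Real.sqrt (1^2 - x^2)/(1-x^2)) x := by
      intro x hx
      have h1 : (0:ℝ) < 1 - x^2 := by nlinarith [hx.1, hx.2]
      have := Real.hasDerivAt_arcsin (ne_of_gt (by linarith [hx.1])) (ne_of_lt hx.2)
      convert this using 1
      rw [one_pow, Real.sqrt_div_self']
    have hnonneg : ∀ x ∈ Set.Ioo (-(1:ℝ)) 1, 0 ≤ Real.sqrt (1^2 - x^2)/(1-x^2) := by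
      intro x hx
      have h1 : (0:ℝ) < 1 - x^2 := by nlinarith [hx.1, hx.2]
      positivity
    have hint : IntervalIntegrable (fun x => Real.sqrt (1^2 - x^2)/(1-x^2))
        MeasureTheory.volume (-(1:ℝ)) 1 := by
      apply intervalIntegrable_deriv_of_nonneg
      · exact Real.continuous_arcsin.continuousOn
      · simpa [Set.uIoc_of_le (by norm_num : (-(1:ℝ)) ≤ 1)] using hderiv
      · simpa [Set.uIoc_of_le (by norm_num : (-(1:ℝ)) ≤ 1)] using hnonneg
    rw [intervalIntegral.integral_eq_sub_of_hasDerivAt_of_le (by norm_num)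
      Real.continuous_arcsin.continuousOn hderiv hint]
    rw [Real.arcsin_one, Real.arcsin_neg_one]
    ring
  · -- b > 0, a < 1
    have ha1 : a < 1 := by nlinarith
    set F : ℝ → ℝ := fun t => Real.arcsin (t/a) - b * Real.arcsin (b*t/(a*Real.sqrt (1-t^2)))
      with hF
    have hderiv : ∀ x ∈ Set.Ioo (-a) a, HasDerivAt F (Real.sqrt (a^2 - x^2)/(1-x^2)) x :=
      fun x hx => aux_deriv a b ha hb0 hab hx
    have hsne : ∀ x ∈ Set.Icc (-a) a, a * Real.sqrt (1 - x^2) ≠ 0 := by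
      intro x hx
      have : x^2 ≤ a^2 := by nlinarith [hx.1, hx.2]
      have h1 : (0:ℝ) < 1 - x^2 := by nlinarith
      positivity
    have hcont : ContinuousOn F (Set.Icc (-a) a) := by
      apply ContinuousOn.sub
      · exact (Real.continuous_arcsin.comp (continuous_id.div_const a)).continuousOn
      · apply ContinuousOn.mul continuousOn_const
        apply Real.continuous_arcsin.comp_continuousOn
        exact ContinuousOn.div (continuous_const.mul continuous_id).continuousOn
          ((continuous_const.mul (Real.continuous_sqrt.comp (by continuity))).continuousOn)
          hsne
    have hnonneg : ∀ x ∈ Set.Ioo (-a) a, 0 ≤ Real.sqrt (a^2 - x^2)/(1-x^2) := by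
      intro x hx
      have : x^2 < a^2 := by nlinarith [hx.1, hx.2]
      have h1 : (0:ℝ) < 1 - x^2 := by nlinarith
      positivity
    have hle : -a ≤ a := by linarith
    have hint : IntervalIntegrable (fun x => Real.sqrt (a^2 - x^2)/(1-x^2))
        MeasureTheory.volume (-a) a := by
      apply intervalIntegrable_deriv_of_nonneg
      · rwa [Set.uIcc_of_le hle]
      · intro x hx
        rw [min_eq_left hle, max_eq_right hle] at hx
        exact hderiv x hx
      · intro x hx
        rw [min_eq_left hle, max_eq_right hle] at hx
        exact hnonneg x hx
    rw [intervalIntegral.integral_eq_sub_of_hasDerivAt_of_le hle hcont hderiv hint]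
    have hb2 : Real.sqrt (1 - a^2) = b := by
      rw [show 1 - a^2 = b^2 by linarith, Real.sqrt_sq hb]
    have hFa : F a = Real.pi/2 - b * (Real.pi/2) := by
      simp only [hF]
      rw [div_self ha.ne', Real.arcsin_one, hb2,
        show b*a/(a*b) = 1 by field_simp [mul_comm], Real.arcsin_one]
    have hFna : F (-a) = -(Real.pi/2) + b * (Real.pi/2) := by
      simp only [hF]
      rw [show (-a)/a = -1 by field_simp, Real.arcsin_neg_one, show (1:ℝ) - (-a)^2 = 1 - a^2 by ring, hb2,
        show b*(-a)/(a*b) = -1 by field_simp [mul_comm], Real.arcsin_neg_one]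
      ring
    rw [hFa, hFna]
    ring

theorem stmt_8 (r : ℝ) (hr0 : 0 < r) (hr2 : r ≤ 1 / 2) :
    (1 / (2 * Real.pi * r)) *
      ∫ t in (-(2 * Real.sqrt (r * (1 - r))))..(2 * Real.sqrt (r * (1 - r))),
        Real.sqrt (4 * r * (1 - r) - t ^ 2) / (1 - t ^ 2) = 1 := by
  set a := 2 * Real.sqrt (r * (1 - r)) with ha_def
  have hrr : 0 < r * (1 - r) := by nlinarith
  have ha : 0 < a := by positivity
  have ha2 : a^2 = 4 * r * (1 - r) := by
    rw [ha_def, mul_pow, Real.sq_sqrt hrr.le]; ring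
  have hb : (0:ℝ) ≤ 1 - 2*r := by linarith
  have hab : a^2 + (1-2*r)^2 = 1 := by rw [ha2]; ring
  have key := aux_integral a (1-2*r) ha hb hab
  rw [show (4 * r * (1 - r) : ℝ) = a^2 from ha2.symm]
  rw [key]
  have hpi : Real.pi ≠ 0 := Real.pi_ne_zero
  field_simp
  ring
end

section
/- For $0 < r \leq 1/2$ and all $n \geq 0$, $\int_{I_r} P_n(t)\, \frac{1}{2\pi r}\frac{\sqrt{4r(1-r)-t^2}}{1-t^2}\,dt = \delta_{n,0}$, where $P_n$ are the polynomials defined by $P_0=1$, $P_1(t)=t$, $tP_n = rP_{n-1}+(1-r)P_{n+1}$, and $I_r = [-2\sqrt{r(1-r)},2\sqrt{r(1-r)}]$. -/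
open Polynomial Real MeasureTheory Set intervalIntegral

noncomputable def S (r : ℝ) (n : ℕ) (θ : ℝ) : ℝ :=
  2*(1-r)*Real.cos (n*θ)*Real.sin θ + (1-2*r)*Real.sin (((n:ℝ)-1)*θ)

lemma S_rec (r : ℝ) (n : ℕ) (θ : ℝ) :
    2*Real.cos θ * S r (n+1) θ = S r n θ + S r (n+2) θ := by
  unfold S
  push_cast
  rw [show ((n:ℝ)+1)*θ = n*θ+θ by ring, show ((n:ℝ)+2)*θ = (n*θ+θ)+θ by ring,
    show ((n:ℝ)+2-1)*θ = n*θ+θ by ring, show ((n:ℝ)+1-1)*θ = n*θ by ring,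
    show ((n:ℝ)-1)*θ = n*θ-θ by ring]
  simp only [Real.cos_add, Real.sin_add, Real.sin_sub]
  linear_combination (2*(1-r)*Real.cos (n*θ)*Real.sin θ) * (Real.sin_sq_add_cos_sq θ)

lemma sinS (r : ℝ) (n : ℕ) (θ : ℝ) :
    Real.sin θ * S r n θ =
      (1/2)*(Real.cos (n*θ) - (1-r)*Real.cos (((n:ℝ)+2)*θ) - r*Real.cos (((n:ℝ)-2)*θ)) := by
  unfold S
  rw [show ((n:ℝ)+2)*θ = (n*θ+θ)+θ by ring, show ((n:ℝ)-2)*θ = (n*θ-θ)-θ by ring,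
    show ((n:ℝ)-1)*θ = n*θ-θ by ring]
  simp only [Real.cos_add, Real.sin_add, Real.sin_sub, Real.cos_sub]
  linear_combination (Real.cos (n*θ)/2) * (Real.sin_sq_add_cos_sq θ)

lemma evalP_two (r t : ℝ) (n : ℕ) :
    (P r (n+2)).eval t = (1-r)⁻¹ * (t * (P r (n+1)).eval t - r * (P r n).eval t) := by
  simp [P, smul_eq_mul]

lemma claimA (r : ℝ) (hr0 : 0 < r) (hr1 : r < 1) (n : ℕ) (θ : ℝ) :
    Real.sin θ * (P r n).eval (2*Real.sqrt (r*(1-r)) * Real.cos θ)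
      = (Real.sqrt (r/(1-r)))^n * S r n θ := by
  have h1r : (0:ℝ) < 1 - r := by linarith
  set a := 2*Real.sqrt (r*(1-r)) with ha
  set q := Real.sqrt (r/(1-r)) with hq
  have hqpos : 0 < q := Real.sqrt_pos.2 (by positivity)
  have hq2 : (1-r) * q^2 = r := by
    rw [hq, Real.sq_sqrt (by positivity)]; field_simp
  have ha2 : a = 2*(1-r)*q := by
    have h : a^2 = (2*(1-r)*q)^2 := by
      rw [ha, mul_pow, Real.sq_sqrt (by positivity)]
      nlinarith [hq2]
    have hapos : 0 ≤ a := by rw [ha]; positivity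
    have hb : 0 < 2*(1-r)*q := by positivity
    nlinarith [h, hapos, hb]
  have key : ∀ m, (Real.sin θ * (P r m).eval (a*Real.cos θ) = q^m * S r m θ) ∧
      (Real.sin θ * (P r (m+1)).eval (a*Real.cos θ) = q^(m+1) * S r (m+1) θ) := by
    intro m
    induction m with
    | zero =>
      constructor
      · simp only [P, eval_one, mul_one, pow_zero, one_mul, S]
        rw [show ((0:ℕ):ℝ) * θ = 0 by push_cast; ring,
          show (((0:ℕ):ℝ)-1) * θ = -θ by push_cast; ring]
        simp [Real.sin_neg]; ring
      · simp only [P, eval_X, pow_one, S]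
        rw [show ((1:ℕ):ℝ) * θ = θ by push_cast; ring,
          show (((1:ℕ):ℝ)-1) * θ = 0 by push_cast; ring]
        simp only [Real.sin_zero, mul_zero, add_zero]
        rw [ha2]; ring
    | succ m ih =>
      refine ⟨ih.2, ?_⟩
      rw [evalP_two, show S r (m+1+1) θ = 2*Real.cos θ*S r (m+1) θ - S r m θ by
        linarith [S_rec r m θ]]
      have step : Real.sin θ * ((1-r)⁻¹ * (a*Real.cos θ * (P r (m+1)).eval (a*Real.cos θ)
          - r * (P r m).eval (a*Real.cos θ)))
          = (1-r)⁻¹ * (a*Real.cos θ * (q^(m+1) * S r (m+1) θ) - r * (q^m * S r m θ)) := by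
        rw [← ih.1, ← ih.2]; ring
      rw [step, ha2]
      field_simp
      linear_combination (q^m * S r m θ) * hq2
  exact (key n).1

noncomputable def Dk (p θ : ℝ) : ℝ := 1 - 2*p*Real.cos (2*θ) + p^2

noncomputable def Cint (p : ℝ) (m : ℕ) : ℝ := ∫ θ in (0:ℝ)..π, Real.cos (m*θ) / Dk p θ

lemma Dk_pos {p : ℝ} (hp0 : 0 ≤ p) (hp1 : p < 1) (θ : ℝ) : 0 < Dk p θ := by
  have h1 := Real.cos_le_one (2*θ)
  have h2 := Real.neg_one_le_cos (2*θ)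
  unfold Dk; nlinarith

lemma Dk_cont (p : ℝ) : Continuous (Dk p) := by
  unfold Dk; continuity

lemma quot_integrable {p : ℝ} (hp0 : 0 ≤ p) (hp1 : p < 1) {f : ℝ → ℝ} (hf : Continuous f)
    (a b : ℝ) : IntervalIntegrable (fun θ => f θ / Dk p θ) MeasureTheory.volume a b :=
  (hf.div (Dk_cont p) (fun θ => (Dk_pos hp0 hp1 θ).ne')).intervalIntegrable a b

lemma icosI (c : ℤ) (hc : c ≠ 0) : ∫ θ in (0:ℝ)..π, Real.cos (c*θ) = 0 := by
  have hc' : (c:ℝ) ≠ 0 := Int.cast_ne_zero.2 hc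
  have := intervalIntegral.integral_comp_mul_left (a := (0:ℝ)) (b := π)
    (fun x => Real.cos x) hc'
  simp only [mul_zero] at this
  rw [this, integral_cos, Real.sin_zero, Real.sin_int_mul_pi]
  simp

lemma Dk_ge {p : ℝ} (hp0 : 0 ≤ p) (θ : ℝ) : (1-p)^2 ≤ Dk p θ := by
  have h1 := Real.cos_le_one (2*θ)
  unfold Dk; nlinarith

lemma Dg (p θ : ℝ) : ∀ N : ℕ,
    Dk p θ * (1 + ∑ k ∈ Finset.range N, 2*p^(k+1)*Real.cos (2*((k:ℝ)+1)*θ))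
    = (1-p^2) + 2*p^(N+1)*(p*Real.cos (2*(N:ℝ)*θ) - Real.cos (2*((N:ℝ)+1)*θ)) := by
  intro N
  induction N with
  | zero =>
    simp only [Finset.range_zero, Finset.sum_empty, add_zero, Nat.cast_zero, mul_zero,
      zero_mul, Real.cos_zero, pow_one]
    unfold Dk; ring
  | succ N ih =>
    rw [Finset.sum_range_succ]
    push_cast
    rw [show 2*((N:ℝ)+1+1)*θ = 2*((N:ℝ)+1)*θ + 2*θ by ring, Real.cos_add,
      show 2*(N:ℝ)*θ = 2*((N:ℝ)+1)*θ - 2*θ by ring, Real.cos_sub] at *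
    unfold Dk at *
    linear_combination ih

lemma cont_cos_lin (c : ℝ) : Continuous fun θ:ℝ => Real.cos (c*θ) :=
  Real.continuous_cos.comp (continuous_const.mul continuous_id)

lemma cont_term (c d : ℝ) : Continuous fun θ:ℝ => d*Real.cos (c*θ) :=
  continuous_const.mul (cont_cos_lin c)

lemma C0 {p : ℝ} (hp0 : 0 < p) (hp1 : p < 1) : Cint p 0 = π/(1-p^2) := by
  have hD := Dk_pos hp0.le hp1
  have hp2 : (0:ℝ) < 1 - p^2 := by nlinarith
  have key : ∀ N : ℕ, |(1-p^2) * Cint p 0 - π| ≤ 4*p^(N+1)/(1-p)^2 * π := by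
    intro N
    have hsum_cont : Continuous (fun θ =>
        1 + ∑ k ∈ Finset.range N, 2*p^(k+1)*Real.cos (2*((k:ℝ)+1)*θ)) :=
      continuous_const.add (continuous_finset_sum _ (fun k _ => cont_term _ _))
    have econt : Continuous (fun θ:ℝ =>
        2*p^(N+1)*(p*Real.cos (2*(N:ℝ)*θ) - Real.cos (2*((N:ℝ)+1)*θ))) :=
      continuous_const.mul ((continuous_const.mul (cont_cos_lin _)).sub (cont_cos_lin _))
    have hmain : (1-p^2) * Cint p 0 - π = - ∫ θ in (0:ℝ)..π,
        (2*p^(N+1)*(p*Real.cos (2*(N:ℝ)*θ) - Real.cos (2*((N:ℝ)+1)*θ))) / Dk p θ := by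
      have h1 : (1-p^2) * Cint p 0 = ∫ θ in (0:ℝ)..π, (1-p^2) * (Real.cos (((0:ℕ):ℝ)*θ) / Dk p θ) := by
        rw [Cint, ← intervalIntegral.integral_const_mul]
      rw [h1]
      have h2 : ∀ θ : ℝ, (1-p^2) * (Real.cos (((0:ℕ):ℝ)*θ) / Dk p θ)
          = (1 + ∑ k ∈ Finset.range N, 2*p^(k+1)*Real.cos (2*((k:ℝ)+1)*θ))
            - (2*p^(N+1)*(p*Real.cos (2*(N:ℝ)*θ) - Real.cos (2*((N:ℝ)+1)*θ))) / Dk p θ := by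
        intro θ
        have hne := (hD θ).ne'
        have hDg := Dg p θ N
        rw [Nat.cast_zero, zero_mul, Real.cos_zero, eq_sub_iff_add_eq, mul_one_div, ← add_div, div_eq_iff hne]
        linear_combination (-1:ℝ) * hDg
      rw [intervalIntegral.integral_congr (g := fun θ =>
        (1 + ∑ k ∈ Finset.range N, 2*p^(k+1)*Real.cos (2*((k:ℝ)+1)*θ))
          - (2*p^(N+1)*(p*Real.cos (2*(N:ℝ)*θ) - Real.cos (2*((N:ℝ)+1)*θ))) / Dk p θ)
        (fun θ _ => h2 θ)]
      rw [intervalIntegral.integral_sub (hsum_cont.intervalIntegrable 0 π)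
        (quot_integrable hp0.le hp1 econt 0 π)]
      have h3 : (∫ θ in (0:ℝ)..π,
          (1 + ∑ k ∈ Finset.range N, 2*p^(k+1)*Real.cos (2*((k:ℝ)+1)*θ))) = π := by
        rw [intervalIntegral.integral_add (continuous_const.intervalIntegrable 0 π)
          ((continuous_finset_sum _ (fun k _ => cont_term _ _)).intervalIntegrable 0 π)]
        rw [intervalIntegral.integral_finset_sum (fun k _ => (cont_term _ _).intervalIntegrable 0 π)]
        have hz : ∀ k ∈ Finset.range N, (∫ θ in (0:ℝ)..π, 2*p^(k+1)*Real.cos (2*((k:ℝ)+1)*θ)) = 0 := by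
          intro k _
          rw [intervalIntegral.integral_const_mul]
          have hc : ∀ θ:ℝ, Real.cos (2*((k:ℝ)+1)*θ) = Real.cos (((2*k+2 : ℤ):ℝ)*θ) := by
            intro θ; congr 1; push_cast; ring
          rw [intervalIntegral.integral_congr (g := fun θ => Real.cos (((2*k+2 : ℤ):ℝ)*θ))
            (fun θ _ => hc θ)]
          rw [icosI (2*k+2) (by omega)]
          ring
        rw [Finset.sum_congr rfl hz]
        simp
      rw [h3]; ring
    rw [hmain, abs_neg]
    have hb : ∀ x ∈ Set.uIoc (0:ℝ) π,
        ‖(2*p^(N+1)*(p*Real.cos (2*(N:ℝ)*x) - Real.cos (2*((N:ℝ)+1)*x))) / Dk p x‖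
          ≤ 4*p^(N+1)/(1-p)^2 := by
      intro x _
      rw [norm_div, Real.norm_eq_abs, Real.norm_eq_abs, abs_of_pos (hD x),
        div_le_div_iff₀ (hD x) (by nlinarith)]
      have c1 := Real.cos_le_one (2*(N:ℝ)*x)
      have c2 := Real.neg_one_le_cos (2*(N:ℝ)*x)
      have c3 := Real.cos_le_one (2*((N:ℝ)+1)*x)
      have c4 := Real.neg_one_le_cos (2*((N:ℝ)+1)*x)
      have hpN : (0:ℝ) ≤ p^(N+1) := by positivity
      have habs : |p*Real.cos (2*(N:ℝ)*x) - Real.cos (2*((N:ℝ)+1)*x)| ≤ 2 := by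
        rw [abs_le]; constructor <;> nlinarith
      have h2 : |2*p^(N+1)*(p*Real.cos (2*(N:ℝ)*x) - Real.cos (2*((N:ℝ)+1)*x))|
          = 2*p^(N+1) * |p*Real.cos (2*(N:ℝ)*x) - Real.cos (2*((N:ℝ)+1)*x)| := by
        rw [abs_mul, abs_of_nonneg (by positivity : (0:ℝ) ≤ 2*p^(N+1))]
      have hDle := Dk_ge hp0.le x
      have hDnn : (0:ℝ) ≤ Dk p x := (hD x).le
      have habs0 := abs_nonneg (p*Real.cos (2*(N:ℝ)*x) - Real.cos (2*((N:ℝ)+1)*x))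
      nlinarith [mul_le_mul_of_nonneg_left habs (by positivity : (0:ℝ) ≤ 2*p^(N+1)),
        mul_le_mul_of_nonneg_left hDle (mul_nonneg (mul_nonneg (by norm_num : (0:ℝ)≤2) hpN) habs0)]
    have hnorm := intervalIntegral.norm_integral_le_of_norm_le_const hb
    simp only [Real.norm_eq_abs, sub_zero, abs_of_pos Real.pi_pos] at hnorm
    exact hnorm
  have htend : Filter.Tendsto (fun N : ℕ => 4*p^(N+1)/(1-p)^2 * π) Filter.atTop (nhds 0) := by
    have h1 : Filter.Tendsto (fun N : ℕ => p^(N+1)) Filter.atTop (nhds 0) := by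
      have := (tendsto_pow_atTop_nhds_zero_of_lt_one hp0.le hp1).comp
        (Filter.tendsto_add_atTop_nat 1)
      exact this
    have := h1.const_mul (4/(1-p)^2*π)
    rw [mul_zero] at this
    convert this using 2 with N
    ring
  have hle : |(1-p^2) * Cint p 0 - π| ≤ 0 := ge_of_tendsto' htend key
  have : (1-p^2) * Cint p 0 - π = 0 := by
    have := abs_nonneg ((1-p^2) * Cint p 0 - π)
    have h0 : |(1-p^2) * Cint p 0 - π| = 0 := le_antisymm hle this
    exact abs_eq_zero.1 h0
  field_simp
  linarith

lemma icosN (c : ℕ) (hc : c ≠ 0) : ∫ θ in (0:ℝ)..π, Real.cos ((c:ℝ)*θ) = 0 := by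
  have h := icosI (c:ℤ) (by exact_mod_cast hc)
  have : ∀ θ:ℝ, Real.cos (((c:ℤ):ℝ)*θ) = Real.cos ((c:ℝ)*θ) := by intro θ; norm_num
  rw [intervalIntegral.integral_congr (g := fun θ => Real.cos ((c:ℝ)*θ)) (fun θ _ => this θ)] at h
  exact h

lemma cont_quot {p : ℝ} (hp0 : 0 ≤ p) (hp1 : p < 1) (c : ℝ) :
    Continuous fun θ => Real.cos (c*θ)/Dk p θ :=
  (cont_cos_lin c).div (Dk_cont p) (fun θ => (Dk_pos hp0 hp1 θ).ne')

lemma Crec0 {p : ℝ} (hp0 : 0 < p) (hp1 : p < 1) :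
    2*p*Cint p 2 = (1+p^2)*Cint p 0 - π := by
  have hD := Dk_pos hp0.le hp1
  have h1 : (∫ θ in (0:ℝ)..π, (2*p*(Real.cos (((2:ℕ):ℝ)*θ)/Dk p θ) + 1))
      = ∫ θ in (0:ℝ)..π, (1+p^2)*(Real.cos (((0:ℕ):ℝ)*θ)/Dk p θ) := by
    apply intervalIntegral.integral_congr
    intro θ _
    have hne := (hD θ).ne'
    simp only [Nat.cast_ofNat, Nat.cast_zero, zero_mul, Real.cos_zero]
    field_simp
    unfold Dk; ring
  have ha : IntervalIntegrable (fun θ => 2*p*(Real.cos (((2:ℕ):ℝ)*θ)/Dk p θ))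
      MeasureTheory.volume 0 π :=
    (continuous_const.mul (cont_quot hp0.le hp1 _)).intervalIntegrable 0 π
  have hb : IntervalIntegrable (fun _ : ℝ => (1:ℝ)) MeasureTheory.volume 0 π :=
    continuous_const.intervalIntegrable 0 π
  rw [intervalIntegral.integral_add ha hb, intervalIntegral.integral_const_mul,
    intervalIntegral.integral_const_mul] at h1
  simp only [intervalIntegral.integral_const, smul_eq_mul, sub_zero, mul_one] at h1
  unfold Cint
  linarith

lemma Crec {p : ℝ} (hp0 : 0 < p) (hp1 : p < 1) (m : ℕ) :
    p*(Cint p (m+4) + Cint p m) = (1+p^2)*Cint p (m+2) := by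
  have hD := Dk_pos hp0.le hp1
  have h1 : (∫ θ in (0:ℝ)..π, (p*(Real.cos ((((m+4):ℕ):ℝ)*θ)/Dk p θ
        + Real.cos (((m:ℕ):ℝ)*θ)/Dk p θ) + Real.cos ((((m+2):ℕ):ℝ)*θ)))
      = ∫ θ in (0:ℝ)..π, (1+p^2)*(Real.cos ((((m+2):ℕ):ℝ)*θ)/Dk p θ) := by
    apply intervalIntegral.integral_congr
    intro θ _
    have hne := (hD θ).ne'
    have trig : Real.cos ((((m+4):ℕ):ℝ)*θ) + Real.cos (((m:ℕ):ℝ)*θ)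
        = 2*Real.cos (2*θ)*Real.cos ((((m+2):ℕ):ℝ)*θ) := by
      push_cast
      rw [show ((m:ℝ)+4)*θ = ((m:ℝ)+2)*θ + 2*θ by ring, Real.cos_add,
        show (m:ℝ)*θ = ((m:ℝ)+2)*θ - 2*θ by ring, Real.cos_sub]
      ring
    field_simp
    push_cast at trig ⊢
    unfold Dk at *
    linear_combination (norm := ring_nf) p * trig
  have ha : IntervalIntegrable (fun θ => p*(Real.cos ((((m+4):ℕ):ℝ)*θ)/Dk p θ
      + Real.cos (((m:ℕ):ℝ)*θ)/Dk p θ)) MeasureTheory.volume 0 π :=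
    (continuous_const.mul ((cont_quot hp0.le hp1 _).add (cont_quot hp0.le hp1 _))).intervalIntegrable 0 π
  have hb : IntervalIntegrable (fun θ : ℝ => Real.cos ((((m+2):ℕ):ℝ)*θ))
      MeasureTheory.volume 0 π := (cont_cos_lin _).intervalIntegrable 0 π
  have hq1 : IntervalIntegrable (fun θ => Real.cos ((((m+4):ℕ):ℝ)*θ)/Dk p θ)
      MeasureTheory.volume 0 π := (cont_quot hp0.le hp1 _).intervalIntegrable 0 π
  have hq2 : IntervalIntegrable (fun θ => Real.cos (((m:ℕ):ℝ)*θ)/Dk p θ)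
      MeasureTheory.volume 0 π := (cont_quot hp0.le hp1 _).intervalIntegrable 0 π
  rw [intervalIntegral.integral_add ha hb, intervalIntegral.integral_const_mul,
    intervalIntegral.integral_add hq1 hq2, intervalIntegral.integral_const_mul] at h1
  rw [icosN (m+2) (by omega)] at h1
  unfold Cint
  linarith

lemma Ceven {p : ℝ} (hp0 : 0 < p) (hp1 : p < 1) : ∀ j : ℕ, Cint p (2*j) = π*p^j/(1-p^2) := by
  have hp2 : (0:ℝ) < 1 - p^2 := by nlinarith
  have hC0 := C0 hp0 hp1
  have hC2 : Cint p 2 = π*p/(1-p^2) := by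
    have h := Crec0 hp0 hp1
    rw [hC0] at h
    have : Cint p 2 = ((1+p^2)*(π/(1-p^2)) - π)/(2*p) := by
      field_simp at h ⊢; linarith
    rw [this]; field_simp; ring
  have key : ∀ j : ℕ, Cint p (2*j) = π*p^j/(1-p^2) ∧ Cint p (2*(j+1)) = π*p^(j+1)/(1-p^2) := by
    intro j
    induction j with
    | zero => exact ⟨by simpa using hC0, by simpa using hC2⟩
    | succ j ih =>
      refine ⟨ih.2, ?_⟩
      have h := Crec hp0 hp1 (2*j)
      rw [show 2*j+4 = 2*(j+1+1) by ring, show 2*j+2 = 2*(j+1) by ring] at h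
      rw [ih.1, ih.2] at h
      have : Cint p (2*(j+1+1)) = ((1+p^2)*(π*p^(j+1)/(1-p^2)) - p*(π*p^j/(1-p^2)))/p := by
        field_simp at h ⊢; linarith
      rw [this]; field_simp; ring
  exact fun j => (key j).1

lemma Codd {p : ℝ} (hp0 : 0 < p) (hp1 : p < 1) : ∀ j : ℕ, Cint p (2*j+1) = 0 := by
  intro j
  have hD := Dk_pos hp0.le hp1
  set f : ℝ → ℝ := fun θ => Real.cos ((((2*j+1:ℕ)):ℝ)*θ) / Dk p θ with hf
  have h1 : (∫ θ in (0:ℝ)..π, f (π - θ)) = ∫ θ in (0:ℝ)..π, f θ := by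
    rw [intervalIntegral.integral_comp_sub_left f π]
    norm_num
  have h2 : ∀ θ, f (π - θ) = - f θ := by
    intro θ
    have hc : Real.cos ((((2*j+1:ℕ)):ℝ)*(π - θ)) = - Real.cos ((((2*j+1:ℕ)):ℝ)*θ) := by
      rw [show (((2*j+1:ℕ)):ℝ)*(π - θ) = (((2*j+1:ℕ)):ℝ)*π - (((2*j+1:ℕ)):ℝ)*θ by ring,
        Real.cos_sub]
      have hcos : Real.cos ((((2*j+1:ℕ)):ℝ)*π) = -1 := by
        have := Real.cos_nat_mul_two_pi_add_pi j
        rw [show (((2*j+1:ℕ)):ℝ)*π = (j:ℝ)*(2*π) + π by push_cast; ring]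
        exact this
      have hsin : Real.sin ((((2*j+1:ℕ)):ℝ)*π) = 0 := by
        have := Real.sin_int_mul_pi ((2*j+1 : ℕ) : ℤ)
        push_cast at this ⊢
        exact this
      rw [hcos, hsin]
      ring
    have hd : Dk p (π - θ) = Dk p θ := by
      unfold Dk
      rw [show 2*(π - θ) = 2*π - 2*θ by ring]
      rw [Real.cos_two_pi_sub]
    rw [hf]
    simp only
    rw [hc, hd, neg_div]
  rw [intervalIntegral.integral_congr (g := fun θ => - f θ) (fun θ _ => h2 θ),
    intervalIntegral.integral_neg] at h1
  have : ∫ θ in (0:ℝ)..π, f θ = 0 := by linarith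
  unfold Cint
  exact this

set_option maxHeartbeats 2000000 in
theorem stmt_9 (r : ℝ) (hr0 : 0 < r) (hr2 : r ≤ 1 / 2) (n : ℕ) :
    ∫ t in (-(2 * Real.sqrt (r * (1 - r))))..(2 * Real.sqrt (r * (1 - r))),
        (P r n).eval t * ((1 / (2 * Real.pi * r)) *
          (Real.sqrt (4 * r * (1 - r) - t ^ 2) / (1 - t ^ 2))) =
      if n = 0 then 1 else 0 := by
  have h1r : (0:ℝ) < 1 - r := by linarith
  set a := 2 * Real.sqrt (r * (1 - r)) with ha
  have hapos : 0 < a := by rw [ha]; positivity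
  have ha2 : a^2 = 4*r*(1-r) := by
    rw [ha, mul_pow, Real.sq_sqrt (by positivity)]; ring
  -- image of (0, π) under a * cos
  have himg : (fun θ => a * Real.cos θ) '' Set.Ioo 0 π = Set.Ioo (-a) a := by
    ext y
    constructor
    · rintro ⟨θ, ⟨hθ1, hθ2⟩, rfl⟩
      dsimp only
      simp only [Set.mem_Ioo]
      have hlt1 : Real.cos θ < 1 := by
        have := Real.cos_lt_cos_of_nonneg_of_le_pi le_rfl hθ2.le hθ1
        simpa using this
      have hlt2 : -1 < Real.cos θ := by
        have := Real.cos_lt_cos_of_nonneg_of_le_pi hθ1.le le_rfl hθ2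
        simpa using this
      constructor
      · nlinarith
      · nlinarith
    · rintro ⟨hy1, hy2⟩
      refine ⟨Real.arccos (y/a), ⟨?_, ?_⟩, ?_⟩
      · rw [Real.arccos_pos]
        rw [div_lt_one hapos]; exact hy2
      · refine lt_of_le_of_ne (Real.arccos_le_pi _) ?_
        rw [Ne, Real.arccos_eq_pi]
        intro h
        rw [div_le_iff₀ hapos] at h
        nlinarith
      · dsimp only
        rw [Real.cos_arccos (by rw [le_div_iff₀ hapos]; linarith)
          (by rw [div_le_iff₀ hapos]; linarith)]
        field_simp
  have hderiv : ∀ x ∈ Set.Ioo (0:ℝ) π,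
      HasDerivWithinAt (fun θ => a * Real.cos θ) (a * -Real.sin x) (Set.Ioo 0 π) x :=
    fun x _ => ((Real.hasDerivAt_cos x).const_mul a).hasDerivWithinAt
  have hinj : Set.InjOn (fun θ => a * Real.cos θ) (Set.Ioo 0 π) := by
    intro x hx y hy hxy
    have h1 : Real.cos x = Real.cos y := by
      exact mul_left_cancel₀ hapos.ne' hxy
    exact Real.injOn_cos ⟨hx.1.le, hx.2.le⟩ ⟨hy.1.le, hy.2.le⟩ h1
  rw [intervalIntegral.integral_of_le (by linarith : -a ≤ a),
    MeasureTheory.integral_Ioc_eq_integral_Ioo, ← himg,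
    MeasureTheory.integral_image_eq_integral_abs_deriv_smul measurableSet_Ioo hderiv hinj]
  simp only [smul_eq_mul]
  rcases lt_or_eq_of_le hr2 with hlt | heq
  · -- r < 1/2
    have hp0 : 0 < r/(1-r) := by positivity
    have hp1 : r/(1-r) < 1 := by rw [div_lt_one h1r]; linarith
    set p := r/(1-r) with hp
    set q := Real.sqrt (r/(1-r)) with hq
    have hqpos : 0 < q := Real.sqrt_pos.2 (by positivity)
    have hq2 : q^2 = p := by rw [hq, hp, Real.sq_sqrt (by positivity)]
    have hDpos := Dk_pos hp0.le hp1
    have hp2 : (0:ℝ) < 1 - p^2 := by nlinarith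
    have hrr : (Real.sqrt (r*(1-r)))^2 = r*(1-r) := Real.sq_sqrt (by positivity)
    clear_value a q
    have main : ∀ m3 : ℕ, (∀ θ:ℝ, Real.cos (((n:ℝ)-2)*θ) = Real.cos (((m3:ℕ):ℝ)*θ)) →
        (∫ θ in Set.Ioo (0:ℝ) π, |a * -Real.sin θ| * ((P r n).eval (a * Real.cos θ) *
          ((1 / (2 * Real.pi * r)) *
          (Real.sqrt (4 * r * (1 - r) - (a * Real.cos θ) ^ 2) / (1 - (a * Real.cos θ) ^ 2)))))
        = q^n/(π*(1-r)) * (Cint p n - (1-r)*Cint p (n+2) - r*Cint p m3) := by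
      intro m3 hc3
      have hcongr : ∀ θ ∈ Set.Ioo (0:ℝ) π,
          |a * -Real.sin θ| * ((P r n).eval (a * Real.cos θ) * ((1 / (2 * Real.pi * r)) *
            (Real.sqrt (4 * r * (1 - r) - (a * Real.cos θ) ^ 2) / (1 - (a * Real.cos θ) ^ 2))))
          = q^n/(π*(1-r)) * (Real.cos (((n:ℕ):ℝ)*θ)/Dk p θ
              - (1-r)*(Real.cos ((((n+2):ℕ):ℝ)*θ)/Dk p θ)
              - r*(Real.cos (((m3:ℕ):ℝ)*θ)/Dk p θ)) := by
        intro θ ⟨hθ1, hθ2⟩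
        have hsin : 0 < Real.sin θ := Real.sin_pos_of_pos_of_lt_pi hθ1 hθ2
        have habs : |a * -Real.sin θ| = a * Real.sin θ := by
          rw [abs_mul, abs_neg, abs_of_pos hsin, abs_of_pos hapos]
        have hsq4 : 4 * r * (1 - r) - (a * Real.cos θ) ^ 2 = (a * Real.sin θ)^2 := by
          nlinarith [Real.sin_sq_add_cos_sq θ]
        have hsqrt : Real.sqrt (4 * r * (1 - r) - (a * Real.cos θ) ^ 2) = a * Real.sin θ := by
          rw [hsq4, Real.sqrt_sq (by positivity)]
        have hden : 1 - (a * Real.cos θ)^2 = (1-r)^2 * Dk p θ := by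
          unfold Dk
          rw [Real.cos_two_mul, hp]
          field_simp
          linear_combination (-(Real.cos θ)^2) * ha2
        have hA := claimA r hr0 (by linarith) n θ
        rw [← ha, ← hq] at hA
        have hS := sinS r n θ
        have e1 : Real.sin θ * (Real.sin θ * (P r n).eval (a * Real.cos θ))
            = q^n * ((1/2)*(Real.cos ((n:ℝ)*θ) - (1-r)*Real.cos (((n:ℝ)+2)*θ)
              - r*Real.cos (((n:ℝ)-2)*θ))) := by
          rw [hA, mul_left_comm, hS]
        rw [habs, hsqrt, hden]
        rw [show Real.cos ((((n+2):ℕ):ℝ)*θ) = Real.cos (((n:ℝ)+2)*θ) by push_cast; ring_nf,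
          ← hc3 θ]
        have hDne := (hDpos θ).ne'
        have hpine := Real.pi_ne_zero
        field_simp
        linear_combination (norm := ring_nf) a^2 * e1
          + (q^n*(Real.cos ((n:ℝ)*θ) - (1-r)*Real.cos (((n:ℝ)+2)*θ)
              - r*Real.cos (((n:ℝ)-2)*θ))/2) * ha2
      rw [MeasureTheory.setIntegral_congr_fun measurableSet_Ioo hcongr,
        ← MeasureTheory.integral_Ioc_eq_integral_Ioo,
        ← intervalIntegral.integral_of_le Real.pi_pos.le,
        intervalIntegral.integral_const_mul]
      congr 1
      have i1 : IntervalIntegrable (fun θ => Real.cos (((n:ℕ):ℝ)*θ)/Dk p θ)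
          MeasureTheory.volume 0 π := (cont_quot hp0.le hp1 _).intervalIntegrable 0 π
      have i2 : IntervalIntegrable (fun θ => (1-r)*(Real.cos ((((n+2):ℕ):ℝ)*θ)/Dk p θ))
          MeasureTheory.volume 0 π :=
        (continuous_const.mul (cont_quot hp0.le hp1 _)).intervalIntegrable 0 π
      have i3 : IntervalIntegrable (fun θ => r*(Real.cos (((m3:ℕ):ℝ)*θ)/Dk p θ))
          MeasureTheory.volume 0 π :=
        (continuous_const.mul (cont_quot hp0.le hp1 _)).intervalIntegrable 0 π
      rw [intervalIntegral.integral_sub (i1.sub i2) i3, intervalIntegral.integral_sub i1 i2,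
        intervalIntegral.integral_const_mul, intervalIntegral.integral_const_mul]
      rfl
    have hkey : p - (1-r)*p^2 - r = 0 := by rw [hp]; field_simp; ring
    match n with
    | 0 =>
      rw [main 2 (fun θ => by push_cast; rw [show ((0:ℝ)-2)*θ = -(2*θ) by ring, Real.cos_neg])]
      simp only [if_pos]
      have hC0 := C0 hp0 hp1
      have hC2 : Cint p 2 = π*p/(1-p^2) := by have := Ceven hp0 hp1 1; norm_num at this; exact this
      rw [hC0, hC2, pow_zero]
      have h1p : (1+p)*(1-r) = 1 := by rw [hp]; field_simp; ring
      have hne1 : (1:ℝ)-p ≠ 0 := by nlinarith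
      have hne1' : (1:ℝ)+p ≠ 0 := by nlinarith
      have hstep : π/(1-p^2) - (1-r)*(π*p/(1-p^2)) - r*(π*p/(1-p^2)) = π/(1+p) := by
        rw [show (1:ℝ)-p^2 = (1-p)*(1+p) by ring]
        field_simp
        ring
      rw [hstep]
      have hpine := Real.pi_ne_zero
      field_simp
      linear_combination π * h1p - (π*r + r) * (mul_inv_cancel₀ h1r.ne')
    | 1 =>
      rw [main 1 (fun θ => by push_cast; rw [show ((1:ℝ)-2)*θ = -θ by ring, Real.cos_neg, one_mul])]
      have h1 : Cint p 1 = 0 := by have := Codd hp0 hp1 0; norm_num at this; exact this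
      have h3 : Cint p 3 = 0 := by have := Codd hp0 hp1 1; norm_num at this; exact this
      rw [h1, h3]
      norm_num
    | (k+2) =>
      rw [main k (fun θ => by push_cast; ring_nf)]
      rw [if_neg (by omega)]
      rcases Nat.even_or_odd k with ⟨j, hj⟩ | ⟨j, hj⟩
      · subst hj
        have e0 : Cint p (j+j) = π*p^j/(1-p^2) := by
          have := Ceven hp0 hp1 j; rw [show 2*j = j+j by ring] at this; exact this
        have e1 : Cint p (j+j+2) = π*p^(j+1)/(1-p^2) := by
          have := Ceven hp0 hp1 (j+1); rw [show 2*(j+1) = j+j+2 by ring] at this; exact this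
        have e2 : Cint p (j+j+2+2) = π*p^(j+2)/(1-p^2) := by
          have := Ceven hp0 hp1 (j+2); rw [show 2*(j+2) = j+j+2+2 by ring] at this; exact this
        rw [e0, e1, e2]
        have hcomb : π*p^(j+1)/(1-p^2) - (1-r)*(π*p^(j+2)/(1-p^2)) - r*(π*p^j/(1-p^2)) = 0 := by
          have h2 : p^(j+1) - (1-r)*p^(j+2) - r*p^j = 0 := by
            have hfac : p^(j+1) - (1-r)*p^(j+2) - r*p^j = p^j * (p - (1-r)*p^2 - r) := by ring
            rw [hfac, hkey, mul_zero]
          field_simp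
          linear_combination π * h2
        rw [hcomb, mul_zero]
      · subst hj
        have o0 : Cint p (2*j+1) = 0 := Codd hp0 hp1 j
        have o1 : Cint p (2*j+1+2) = 0 := by
          have := Codd hp0 hp1 (j+1); rw [show 2*(j+1)+1 = 2*j+1+2 by ring] at this; exact this
        have o2 : Cint p (2*j+1+2+2) = 0 := by
          have := Codd hp0 hp1 (j+2); rw [show 2*(j+2)+1 = 2*j+1+2+2 by ring] at this; exact this
        rw [o0, o1, o2]
        norm_num
  · -- r = 1/2
    have hr : r = 1/2 := heq
    have ha1 : a = 1 := by
      have h4 : a^2 = 1 := by rw [ha2, hr]; norm_num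
      nlinarith [hapos]
    have hcongr : ∀ θ ∈ Set.Ioo (0:ℝ) π,
        |a * -Real.sin θ| * ((P r n).eval (a * Real.cos θ) * ((1 / (2 * Real.pi * r)) *
          (Real.sqrt (4 * r * (1 - r) - (a * Real.cos θ) ^ 2) / (1 - (a * Real.cos θ) ^ 2))))
        = Real.cos ((n:ℝ)*θ) / π := by
      intro θ ⟨hθ1, hθ2⟩
      have hsin : 0 < Real.sin θ := Real.sin_pos_of_pos_of_lt_pi hθ1 hθ2
      have habs : |a * -Real.sin θ| = Real.sin θ := by
        rw [ha1, abs_mul, abs_neg, abs_of_pos hsin]; simp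
      have hsq : 4 * r * (1 - r) - (a * Real.cos θ) ^ 2 = (Real.sin θ)^2 := by
        rw [ha1, hr]; nlinarith [Real.sin_sq_add_cos_sq θ]
      have hden : 1 - (a * Real.cos θ)^2 = (Real.sin θ)^2 := by
        rw [ha1]; nlinarith [Real.sin_sq_add_cos_sq θ]
      rw [habs, hsq, hden, Real.sqrt_sq hsin.le]
      have hA := claimA r hr0 (by linarith) n θ
      rw [← ha] at hA
      have hq1 : Real.sqrt (r/(1-r)) = 1 := by
        rw [hr]; norm_num
      rw [hq1, one_pow, one_mul] at hA
      have hS : S r n θ = Real.cos ((n:ℝ)*θ) * Real.sin θ := by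
        unfold S; rw [hr]; ring_nf
      rw [hS] at hA
      have heval : (P r n).eval (a * Real.cos θ) = Real.cos ((n:ℝ)*θ) :=
        mul_left_cancel₀ hsin.ne' (by rw [hA]; ring)
      rw [heval, hr]
      have hsne := hsin.ne'
      have hpine := Real.pi_ne_zero
      field_simp
    rw [MeasureTheory.setIntegral_congr_fun measurableSet_Ioo hcongr]
    rw [← MeasureTheory.integral_Ioc_eq_integral_Ioo,
      ← intervalIntegral.integral_of_le Real.pi_pos.le]
    by_cases hn : n = 0
    · subst hn
      simp only [if_pos]
      rw [intervalIntegral.integral_congr (g := fun _ => 1/π) (fun θ _ => by norm_num)]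
      simp [Real.pi_ne_zero]
    · rw [if_neg hn]
      have : (∫ θ in (0:ℝ)..π, Real.cos ((n:ℝ)*θ) / π)
          = (∫ θ in (0:ℝ)..π, Real.cos ((n:ℝ)*θ)) / π := by
        rw [intervalIntegral.integral_div]
      rw [this, icosN n hn, zero_div]
end

section
/- Let $0 < r < 1/2$ and let $\lambda$ be real with $1 < |\lambda| < \sqrt{(1-r)/r}$. Then the atomic weight $\frac{1 - c_r(\lambda^2)}{1 - c_r(\lambda)^2}$ is strictly positive and strictly less than $1$, where $c_r(x) = rx + (1-r)/x$. -/
theorem stmt_16 (r : ℝ) (hr0 : 0 < r) (hr2 : r < 1 / 2) (l : ℝ)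
    (hl1 : 1 < |l|) (hl2 : |l| < Real.sqrt ((1 - r) / r)) :
    0 < (1 - (r * l ^ 2 + (1 - r) / l ^ 2)) / (1 - (r * l + (1 - r) / l) ^ 2) ∧
    (1 - (r * l ^ 2 + (1 - r) / l ^ 2)) / (1 - (r * l + (1 - r) / l) ^ 2) < 1 := by
  have hl0 : l ≠ 0 := by
    intro h
    simp [h] at hl1
    linarith
  have ht1 : 1 < l ^ 2 := by
    have := sq_abs l
    nlinarith [abs_nonneg l]
  have hrr : (0:ℝ) ≤ (1 - r) / r := div_nonneg (by linarith) hr0.le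
  have hs : Real.sqrt ((1 - r) / r) ^ 2 = (1 - r) / r := Real.sq_sqrt hrr
  have ht2' : l ^ 2 < (1 - r) / r := by
    have := sq_abs l
    nlinarith [abs_nonneg l, Real.sqrt_nonneg ((1 - r) / r)]
  have ht2 : r * l ^ 2 < 1 - r := by
    rw [lt_div_iff₀ hr0] at ht2'
    linarith [ht2']
  have hl2pos : (0:ℝ) < l ^ 2 := by positivity
  set N := 1 - (r * l ^ 2 + (1 - r) / l ^ 2) with hN
  set D := 1 - (r * l + (1 - r) / l) ^ 2 with hD
  have hNeq : N * l ^ 2 = (l ^ 2 - 1) * ((1 - r) - r * l ^ 2) := by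
    rw [hN]; field_simp; ring
  have hDeq : D * l ^ 2 = (l ^ 2 - 1) * ((1 - r) ^ 2 - r ^ 2 * l ^ 2) := by
    rw [hD]; field_simp; ring
  have hfac2 : (0:ℝ) < (1 - r) ^ 2 - r ^ 2 * l ^ 2 := by nlinarith
  have hNpos : 0 < N := by nlinarith
  have hDpos : 0 < D := by nlinarith
  have hkey : (D - N) * l ^ 2 = (l ^ 2 - 1) ^ 2 * (r * (1 - r)) := by linear_combination hDeq - hNeq
  have hND : N < D := by
    have h1 : 0 < (l ^ 2 - 1) ^ 2 * (r * (1 - r)) := mul_pos (pow_pos (by linarith) 2) (mul_pos hr0 (by linarith))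
    nlinarith [hkey, h1, hl2pos]
  constructor
  · positivity
  · rw [div_lt_one hDpos]; exact hND
end
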